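/- (Antisymmetry of the game when the network is initially unbiased.) If z⁰ = 0 (equivalently, c_i = 0 for all i), then for all x¹, x², y¹, y² ∈ ℝⁿ, F(x¹, x², y¹, y²) = −F(y¹, y², x¹, x²). In particular, F(x¹, x², x¹, x²) = 0 for all x¹, x². -/
import Mathlib


/-- The two-phase objective function `F(x¹,x²,y¹,y²)` (the sum of final opinions). -/
noncomputable def twoPhaseF (n : ℕ) (θ c r s : Fin n → ℝ)
    (b : Matrix (Fin n) (Fin n) ℝ) (x1 x2 y1 y2 : Fin n → ℝ) : ℝ :=
  (∑ i, ∑ j, c i * b j i)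
  + (∑ j, x2 j * (θ j / 2) * ((∑ i, c i * b j i) + r j))
  + (∑ j, y2 j * (θ j / 2) * ((∑ i, c i * b j i) - r j))
  + (∑ i, x1 i * (θ i / 2) * (1 + c i) *
      (s i + ∑ j, (x2 j + y2 j) * (θ j / 2) * b j i))
  - (∑ i, y1 i * (θ i / 2) * (1 - c i) *
      (s i + ∑ j, (x2 j + y2 j) * (θ j / 2) * b j i))

/-- if the network is initially unbiased (`z⁰ = 0`), then `F` is
antisymmetric under interchanging the two camps' strategies; in particular the
game value on the diagonal is zero. -/
theorem antisymmetry_unbiased_network (n : ℕ) (hn : 0 < n)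
    (W : Matrix (Fin n) (Fin n) ℝ)
    (hW : ∀ i, ∑ j, |W i j| < 1)
    (w0 θ z0 : Fin n → ℝ)
    (hz0 : z0 = 0)
    (Δ : Matrix (Fin n) (Fin n) ℝ) (hΔ : Δ = (1 - W)⁻¹)
    (r : Fin n → ℝ) (hr : ∀ i, r i = ∑ j, Δ j i)
    (c : Fin n → ℝ) (hc : ∀ i, c i = w0 i * z0 i)
    (b : Matrix (Fin n) (Fin n) ℝ) (hb : ∀ j i, b j i = r j * w0 j * Δ j i)
    (s : Fin n → ℝ) (hs : ∀ i, s i = ∑ j, b j i) :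
    (∀ x1 x2 y1 y2 : Fin n → ℝ,
      twoPhaseF n θ c r s b x1 x2 y1 y2 = -(twoPhaseF n θ c r s b y1 y2 x1 x2)) ∧
    (∀ x1 x2 : Fin n → ℝ, twoPhaseF n θ c r s b x1 x2 x1 x2 = 0) := by
  have hc0 : ∀ i, c i = 0 := by simp [hc, hz0]
  have key : ∀ x1 x2 y1 y2 : Fin n → ℝ,
      twoPhaseF n θ c r s b x1 x2 y1 y2 = -(twoPhaseF n θ c r s b y1 y2 x1 x2) := by
    intro x1 x2 y1 y2
    simp only [twoPhaseF, hc0, zero_mul, mul_zero, Finset.sum_const_zero,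
      add_zero, zero_add, sub_zero]
    have h : ∀ i : Fin n, (∑ j, (x2 j + y2 j) * (θ j / 2) * b j i)
        = ∑ j, (y2 j + x2 j) * (θ j / 2) * b j i := by
      intro i; exact Finset.sum_congr rfl (fun j _ => by ring)
    have h2 : ∀ v : Fin n → ℝ, (∑ x, v x * (θ x / 2) * (0 - r x))
        = -∑ x, v x * (θ x / 2) * r x := by
      intro v
      rw [← Finset.sum_neg_distrib]
      exact Finset.sum_congr rfl (fun j _ => by ring)
    simp only [h, h2]
    ring
  exact ⟨key, fun x1 x2 => by have := key x1 x2 x1 x2; linarith⟩
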